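/- Let R be a finite set of size ≥ 2 in a valued field, and for each pair of distinct r, r' ∈ R let d_{r∧r'} denote the depth of the smallest cluster containing both (i.e. d_{r∧r'} = v(r − r')... in general, the depth of r∧r'). Then 2·∑_{r≠r'∈R} d_{r∧r'} = ∑_{proper clusters s} d_s·(|s|² − ∑_{s'<s}|s'|²), where the sum is over all clusters s of size > 1 and s' ranges over the children (maximal proper subclusters) of s. -/

import Mathlib

open scoped Classical

/-- A cluster picture on a finite set `R`: a nested-or-disjoint family of nonempty subsets
("clusters") containing all singletons and `R`, with depths `d_s ∈ ℚ` strictly increasing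
under reverse inclusion (depths are only meaningful on clusters of size ≥ 2). -/
structure ClusterPicture (α : Type*) [DecidableEq α] where
  R : Finset α
  clusters : Finset (Finset α)
  nonempty_mem : ∀ s ∈ clusters, s.Nonempty
  subset_R : ∀ s ∈ clusters, s ⊆ R
  singleton_mem : ∀ r ∈ R, ({r} : Finset α) ∈ clusters
  top_mem : R ∈ clusters
  nested : ∀ s ∈ clusters, ∀ t ∈ clusters, s ⊆ t ∨ t ⊆ s ∨ Disjoint s t
  depth : Finset α → ℚ
  depth_lt : ∀ s ∈ clusters, ∀ t ∈ clusters, t ⊂ s → 2 ≤ t.card → depth s < depth t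

/-- The children of a cluster `s`: the maximal clusters properly contained in `s`. -/
def ClusterPicture.children {α : Type*} [DecidableEq α] (P : ClusterPicture α)
    (s : Finset α) : Finset (Finset α) :=
  P.clusters.filter (fun s' => s' ⊂ s ∧ ∀ t ∈ P.clusters, s' ⊂ t → ¬ t ⊂ s)

namespace ClusterPicture
variable {α : Type*} [DecidableEq α] (P : ClusterPicture α)

lemma exists_child_superset {s t : Finset α} (ht : t ∈ P.clusters) (hts : t ⊂ s) :
    ∃ c ∈ P.children s, t ⊆ c := by
  obtain ⟨c, hc, hmax⟩ := Finset.exists_max_image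
    (P.clusters.filter fun u => t ⊆ u ∧ u ⊂ s) Finset.card
    ⟨t, Finset.mem_filter.2 ⟨ht, subset_rfl, hts⟩⟩
  rw [Finset.mem_filter] at hc
  refine ⟨c, Finset.mem_filter.2 ⟨hc.1, hc.2.2, ?_⟩, hc.2.1⟩
  intro u hu hcu hus
  have := hmax u (Finset.mem_filter.2 ⟨hu, hc.2.1.trans hcu.subset, hus⟩)
  exact absurd (Finset.card_lt_card hcu) (not_lt.2 this)

lemma children_disjoint {s c1 c2 : Finset α} (h1 : c1 ∈ P.children s)
    (h2 : c2 ∈ P.children s) (hne : c1 ≠ c2) : Disjoint c1 c2 := by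
  rw [children, Finset.mem_filter] at h1 h2
  rcases P.nested c1 h1.1 c2 h2.1 with h | h | h
  · exact absurd h2.2.1 (h1.2.2 c2 h2.1 (h.ssubset_of_ne hne))
  · exact absurd h1.2.1 (h2.2.2 c1 h1.1 (h.ssubset_of_ne hne.symm))
  · exact h

lemma child_ssubset {s c : Finset α} (h : c ∈ P.children s) : c ⊂ s :=
  (Finset.mem_filter.1 h).2.1

lemma exists_child_mem {s : Finset α} (hs : s ∈ P.clusters) (hcard : 2 ≤ s.card)
    {r : α} (hr : r ∈ s) : ∃ c ∈ P.children s, r ∈ c := by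
  have hsing : ({r} : Finset α) ∈ P.clusters :=
    P.singleton_mem r (P.subset_R s hs hr)
  have hss : ({r} : Finset α) ⊂ s := by
    refine Finset.ssubset_iff_subset_ne.2 ⟨Finset.singleton_subset_iff.2 hr, ?_⟩
    intro h
    simp [← h] at hcard
  obtain ⟨c, hc, hrc⟩ := P.exists_child_superset hsing hss
  exact ⟨c, hc, Finset.singleton_subset_iff.1 hrc⟩

end ClusterPicture

/-- `2 ∑_{r ≠ r'} d_{r∧r'} = ∑_{s proper} d_s (|s|² − ∑_{s' < s} |s'|²)`, where the
left-hand sum over unordered pairs, doubled, is written as a sum over ordered pairs, and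
`w r r'` is the smallest cluster containing `r` and `r'`. -/
theorem stmt_3 {α : Type*} [DecidableEq α] (P : ClusterPicture α) (hR : 2 ≤ P.R.card)
    (w : α → α → Finset α)
    (hw : ∀ r ∈ P.R, ∀ r' ∈ P.R, w r r' ∈ P.clusters ∧ r ∈ w r r' ∧ r' ∈ w r r' ∧
      ∀ t ∈ P.clusters, r ∈ t → r' ∈ t → w r r' ⊆ t) :
    ∑ r ∈ P.R, ∑ r' ∈ P.R.erase r, P.depth (w r r') =
      ∑ s ∈ P.clusters.filter (fun s => 2 ≤ s.card),
        P.depth s * ((s.card : ℚ) ^ 2 - ∑ s' ∈ P.children s, (s'.card : ℚ) ^ 2) := by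
  classical
  set Pr : Finset (α × α) := (P.R ×ˢ P.R).filter (fun p => p.1 ≠ p.2) with hPr
  set S : Finset (Finset α) := P.clusters.filter (fun s => 2 ≤ s.card) with hS
  -- memberships of pairs
  have hmemR : ∀ p ∈ Pr, p.1 ∈ P.R ∧ p.2 ∈ P.R ∧ p.1 ≠ p.2 := by
    intro p hp
    rw [hPr, Finset.mem_filter, Finset.mem_product] at hp
    exact ⟨hp.1.1, hp.1.2, hp.2⟩
  -- w maps Pr into S
  have hmaps : ∀ p ∈ Pr, w p.1 p.2 ∈ S := by
    intro p hp
    obtain ⟨h1, h2, hne⟩ := hmemR p hp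
    obtain ⟨hc, hm1, hm2, -⟩ := hw p.1 h1 p.2 h2
    exact Finset.mem_filter.2 ⟨hc, Finset.one_lt_card.2 ⟨p.1, hm1, p.2, hm2, hne⟩⟩
  -- LHS as sum over ordered pairs
  have hL : ∑ r ∈ P.R, ∑ r' ∈ P.R.erase r, P.depth (w r r')
      = ∑ p ∈ Pr, P.depth (w p.1 p.2) := by
    rw [hPr, Finset.sum_filter, Finset.sum_product]
    refine Finset.sum_congr rfl fun r _ => ?_
    rw [← Finset.sum_filter, Finset.filter_ne]
  rw [hL, ← Finset.sum_fiberwise_of_maps_to hmaps (fun p => P.depth (w p.1 p.2))]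
  refine Finset.sum_congr rfl fun s hs => ?_
  rw [hS, Finset.mem_filter] at hs
  obtain ⟨hscl, hscard⟩ := hs
  -- fiber description
  have hfiber : Pr.filter (fun p => w p.1 p.2 = s)
      = (s ×ˢ s) \ (P.children s).biUnion (fun c => c ×ˢ c) := by
    ext p
    simp only [Finset.mem_filter, Finset.mem_sdiff, Finset.mem_biUnion,
      Finset.mem_product, not_exists]
    constructor
    · rintro ⟨hp, hws⟩
      obtain ⟨h1, h2, hne⟩ := hmemR p hp
      obtain ⟨hc, hm1, hm2, -⟩ := hw p.1 h1 p.2 h2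
      rw [hws] at hm1 hm2
      refine ⟨⟨hm1, hm2⟩, ?_⟩
      rintro c ⟨hcch, hpc1, hpc2⟩
      have hcsub := P.child_ssubset hcch
      have hccl := (Finset.mem_filter.1 hcch).1
      have : w p.1 p.2 ⊆ c := (hw p.1 h1 p.2 h2).2.2.2 c hccl hpc1 hpc2
      rw [hws] at this
      exact absurd (this.antisymm hcsub.subset).symm hcsub.ne
    · rintro ⟨⟨hp1, hp2⟩, hnoc⟩
      have h1 : p.1 ∈ P.R := P.subset_R s hscl hp1
      have h2 : p.2 ∈ P.R := P.subset_R s hscl hp2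
      have hne : p.1 ≠ p.2 := by
        intro he
        obtain ⟨c, hcch, hrc⟩ := P.exists_child_mem hscl hscard hp1
        exact hnoc c ⟨hcch, hrc, he ▸ hrc⟩
      obtain ⟨hwcl, hm1, hm2, hmin⟩ := hw p.1 h1 p.2 h2
      have hsub : w p.1 p.2 ⊆ s := hmin s hscl hp1 hp2
      have hws : w p.1 p.2 = s := by
        rcases hsub.ssubset_or_eq with hss | he
        · obtain ⟨c, hcch, hwc⟩ := P.exists_child_superset hwcl hss
          exact absurd ⟨hcch, hwc hm1, hwc hm2⟩ (hnoc c)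
        · exact he
      exact ⟨Finset.mem_filter.2 ⟨Finset.mem_product.2 ⟨h1, h2⟩, hne⟩, hws⟩
  -- sum over fiber is depth s times its cardinality
  have hsum : ∑ p ∈ Pr.filter (fun p => w p.1 p.2 = s), P.depth (w p.1 p.2)
      = (Pr.filter (fun p => w p.1 p.2 = s)).card • P.depth s := by
    rw [Finset.sum_congr rfl (fun p hp => by
      rw [(Finset.mem_filter.1 hp).2]), Finset.sum_const]
  rw [hsum, hfiber]
  -- count the fiber
  have hBsub : (P.children s).biUnion (fun c => c ×ˢ c) ⊆ s ×ˢ s := by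
    intro p hp
    obtain ⟨c, hc, hpc⟩ := Finset.mem_biUnion.1 hp
    rw [Finset.mem_product] at hpc ⊢
    have := (P.child_ssubset hc).subset
    exact ⟨this hpc.1, this hpc.2⟩
  have hBcard : ((P.children s).biUnion (fun c => c ×ˢ c)).card
      = ∑ c ∈ P.children s, c.card ^ 2 := by
    rw [Finset.card_biUnion]
    · exact Finset.sum_congr rfl fun c _ => by rw [Finset.card_product, sq]
    · intro c1 h1 c2 h2 hne
      have hd := P.children_disjoint h1 h2 hne
      rw [Function.onFun, Finset.disjoint_left]
      intro p hp1 hp2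
      rw [Finset.mem_product] at hp1 hp2
      exact (Finset.disjoint_left.1 hd) hp1.1 hp2.1
  rw [Finset.card_sdiff_of_subset hBsub, Finset.card_product, hBcard, nsmul_eq_mul]
  have hle : ∑ c ∈ P.children s, c.card ^ 2 ≤ s.card * s.card := by
    rw [← Finset.card_product, ← hBcard]
    exact Finset.card_le_card hBsub
  rw [Nat.cast_sub hle]
  push_cast
  ring
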